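/- Let {X_n} be the stationary symmetric binary Markov process with transition probability q ∈ (0,1/2), let 0 < λ < 1, and for each n let S be a random subset of {1,…,n} obtained by including each element independently with probability λ. Then lim_{n→∞} H(X_S|S)/(λn) = E[h(q^{*G})], where G is a geometric random variable with parameter λ and q^{*k} := (1-(1-2q)^k)/2. -/

import Mathlib

open Real Filter MeasureTheory

/-- Binary entropy function (base-2 logarithm), with `binEnt 0 = binEnt 1 = 0`. -/
noncomputable def binEnt (p : ℝ) : ℝ :=
  -p * Real.logb 2 p - (1 - p) * Real.logb 2 (1 - p)

/-- Inverse of the binary entropy function, mapping `[0,1]` onto `[0,1/2]`. -/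
noncomputable def binEntInv (y : ℝ) : ℝ :=
  sInf {p : ℝ | p ∈ Set.Icc (0:ℝ) (1/2) ∧ y ≤ binEnt p}

/-- Binary convolution `a*b := a(1-b) + b(1-a)`. -/
def bConv (a b : ℝ) : ℝ := a * (1 - b) + b * (1 - a)

/-- Shannon entropy (in bits) of a distribution on a finite type. -/
noncomputable def entropyDist {β : Type*} [Fintype β] (p : β → ℝ) : ℝ :=
  ∑ b, -(p b * Real.logb 2 (p b))

/-- Probability of the path `x` under the stationary symmetric binary Markov process with
transition probability `q`: the first coordinate is uniform (`Bernoulli(1/2)`) and each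
subsequent coordinate flips the previous one with probability `q`. -/
noncomputable def symPathProb (q : ℝ) (n : ℕ) (x : Fin n → Bool) : ℝ :=
  ∏ i : Fin n,
    if (i : ℕ) = 0 then (1/2 : ℝ)
    else if x ⟨(i : ℕ) - 1, Nat.lt_of_le_of_lt (Nat.sub_le _ _) i.isLt⟩ = x i then 1 - q else q

/-- Output distribution of a memoryless binary symmetric channel with crossover probability `a`
applied to an input with distribution `p` (each coordinate flipped independently w.p. `a`). -/
noncomputable def bscOutput {n : ℕ} (a : ℝ) (p : (Fin n → Bool) → ℝ) : (Fin n → Bool) → ℝ :=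
  fun y => ∑ x : Fin n → Bool, p x * ∏ i, (if y i = x i then 1 - a else a)

/-- Distribution of the projection onto the coordinates in `s` of a vector with distribution `p`. -/
noncomputable def projDist {n : ℕ} (p : (Fin n → Bool) → ℝ) (s : Finset (Fin n)) :
    ({ i // i ∈ s } → Bool) → ℝ :=
  fun y => ∑ x : Fin n → Bool, if (∀ i : { i // i ∈ s }, x i.val = y i) then p x else 0

/-- `H(X_S | S) = ∑_{s ⊆ [n]} P(S = s) H(X_s)`, where the random subset `S` contains each
element of `[n]` independently with probability `lam`. -/
noncomputable def condEntProj {n : ℕ} (lam : ℝ) (p : (Fin n → Bool) → ℝ) : ℝ :=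
  ∑ s : Finset (Fin n), lam ^ s.card * (1 - lam) ^ (n - s.card) * entropyDist (projDist p s)

/-- Transition kernel of a binary Markov chain: `P(b | a)` with off-diagonal entries
`q01 = P(1|0)` and `q10 = P(0|1)`. -/
def markovTrans (q01 q10 : ℝ) (a b : Bool) : ℝ :=
  if a then (if b then 1 - q10 else q10) else (if b then q01 else 1 - q01)

/-- Probability of the path `x` under the binary Markov chain with initial distribution
`(p0, p1)` and transition probabilities `q01, q10`. -/
noncomputable def markovPathProb (p0 p1 q01 q10 : ℝ) (n : ℕ) (x : Fin n → Bool) : ℝ :=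
  ∏ i : Fin n,
    if (i : ℕ) = 0 then (if x i then p1 else p0)
    else markovTrans q01 q10 (x ⟨(i : ℕ) - 1, Nat.lt_of_le_of_lt (Nat.sub_le _ _) i.isLt⟩) (x i)


namespace ProjEnt

def ker (a : ℝ) (b c : Bool) : ℝ := if b = c then 1 - a else a

noncomputable def qstar (q : ℝ) (g : ℕ) : ℝ := (1 - (1 - 2*q)^g)/2

lemma sum_ker (a : ℝ) (b : Bool) : ∑ c, ker a b c = 1 := by
  cases b <;> simp [ker, Fintype.sum_bool] <;> ring

lemma ker_comm (a : ℝ) (b c : Bool) : ker a b c = ker a c b := by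
  cases b <;> cases c <;> simp [ker]

lemma ker_comp (a a' : ℝ) (b d : Bool) :
    ∑ c, ker a b c * ker a' c d = ker (a * (1 - a') + a' * (1 - a)) b d := by
  cases b <;> cases d <;> simp [ker, Fintype.sum_bool] <;> ring

lemma qstar_zero (q : ℝ) : qstar q 0 = 0 := by simp [qstar]

lemma qstar_one (q : ℝ) : qstar q 1 = q := by simp [qstar]

lemma qstar_succ (q : ℝ) (g : ℕ) :
    qstar q g * (1 - q) + q * (1 - qstar q g) = qstar q (g+1) := by
  simp only [qstar, pow_succ]; ring

lemma ker_zero (b c : Bool) : ker 0 b c = if b = c then 1 else 0 := by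
  simp [ker]

lemma sum_ker_ent (a : ℝ) (b : Bool) :
    ∑ c, -(ker a b c * Real.logb 2 (ker a b c)) =
      -a * Real.logb 2 a - (1 - a) * Real.logb 2 (1 - a) := by
  cases b <;> simp [ker, Fintype.sum_bool] <;> ring

lemma snoc_val {n : ℕ} (x : Fin n → Bool) (b : Bool) (v : ℕ) (h : v < n) (h2 : v < n+1) :
    (Fin.snoc x b : Fin (n+1) → Bool) ⟨v, h2⟩ = x ⟨v, h⟩ := by
  have : (⟨v, h2⟩ : Fin (n+1)) = Fin.castSucc ⟨v, h⟩ := rfl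
  rw [this, Fin.snoc_castSucc]

lemma symPathProb_snoc (q : ℝ) (n : ℕ) (x : Fin n → Bool) (b : Bool) :
    symPathProb q (n+1) (Fin.snoc x b) =
      symPathProb q n x * (if h : 0 < n then ker q (x ⟨n-1, by omega⟩) b else 1/2) := by
  unfold symPathProb
  rw [Fin.prod_univ_castSucc]
  congr 1
  · apply Finset.prod_congr rfl
    intro i _
    by_cases h0 : (i : ℕ) = 0
    · simp [h0]
    · have hlt : (i : ℕ) - 1 < n := by omega
      rw [if_neg (by simpa using h0), if_neg h0]
      simp only [Fin.coe_castSucc]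
      simp only [snoc_val x b _ hlt, Fin.snoc_castSucc]
  · by_cases hn : 0 < n
    · have : ((Fin.last n : Fin (n+1)) : ℕ) ≠ 0 := by simp [Fin.last]; omega
      rw [if_neg this, dif_pos hn]
      have hlt : n - 1 < n := by omega
      simp only [Fin.val_last]
      simp only [snoc_val x b _ hlt, Fin.snoc_last]
      rfl
    · interval_cases n
      simp [Fin.last]



def snocEquiv (n : ℕ) : (Fin n → Bool) × Bool ≃ (Fin (n+1) → Bool) where
  toFun p := Fin.snoc p.1 p.2
  invFun x := (Fin.init x, x (Fin.last n))
  left_inv p := by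
    ext <;> simp [Fin.init_snoc, Fin.snoc_last]
  right_inv x := Fin.snoc_init_self x

lemma sum_snoc {n : ℕ} (f : (Fin (n+1) → Bool) → ℝ) :
    ∑ x, f x = ∑ x : Fin n → Bool, ∑ b, f (Fin.snoc x b) := by
  rw [← (snocEquiv n).sum_comp f, Fintype.sum_prod_type]
  rfl

lemma comp_castLE_refl {m : ℕ} (x : Fin m → Bool) (h : m ≤ m) :
    x ∘ Fin.castLE h = x := by
  funext i; exact congrArg x (Fin.ext rfl)

lemma snoc_comp_castLE {m n : ℕ} (h : m ≤ n) (h2 : m ≤ n+1) (x : Fin n → Bool) (b : Bool) :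
    (Fin.snoc x b : Fin (n+1) → Bool) ∘ Fin.castLE h2 = x ∘ Fin.castLE h := by
  funext i
  have hv : (i : ℕ) < n := lt_of_lt_of_le i.isLt h
  show (Fin.snoc x b : Fin (n+1) → Bool) ⟨(i : ℕ), by omega⟩ = _
  rw [snoc_val x b _ hv]
  rfl

lemma sum_tail (q : ℝ) (m n : ℕ) (h : m ≤ n) (g : (Fin m → Bool) → ℝ) :
    ∑ x : Fin n → Bool, g (x ∘ Fin.castLE h) * symPathProb q n x
    = ∑ x : Fin m → Bool, g x * symPathProb q m x := by
  induction n, h using Nat.le_induction with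
  | base =>
    apply Finset.sum_congr rfl
    intro x _
    rw [comp_castLE_refl]
  | succ n hmn ih =>
    rw [sum_snoc]
    have step : ∀ x : Fin n → Bool,
        (∑ b, g ((Fin.snoc x b : Fin (n+1) → Bool) ∘ Fin.castLE (by omega)) *
          symPathProb q (n+1) (Fin.snoc x b))
        = g (x ∘ Fin.castLE hmn) * symPathProb q n x := by
      intro x
      have : ∀ b : Bool, g ((Fin.snoc x b : Fin (n+1) → Bool) ∘ Fin.castLE (by omega)) *
          symPathProb q (n+1) (Fin.snoc x b)
          = g (x ∘ Fin.castLE hmn) * symPathProb q n x *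
            (if h : 0 < n then ker q (x ⟨n-1, by omega⟩) b else 1/2) := by
        intro b
        rw [snoc_comp_castLE hmn, symPathProb_snoc]
        ring
      rw [Finset.sum_congr rfl fun b _ => this b, ← Finset.mul_sum]
      by_cases hn : 0 < n
      · simp only [dif_pos hn, sum_ker, mul_one]
      · simp only [dif_neg hn, Fintype.sum_bool]
        norm_num
    rw [Finset.sum_congr rfl fun x _ => step x, ih]


lemma sum_ker_zero (w : Bool → ℝ) (b : Bool) : ∑ c, ker 0 b c * w c = w b := by
  cases b <;> simp [ker, Fintype.sum_bool]

lemma bridge (q : ℝ) (p m : ℕ) (hp : p ≤ m) (g : (Fin (p+1) → Bool) → ℝ) (w : Bool → ℝ) :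
    ∑ x : Fin (m+1) → Bool,
      g (x ∘ Fin.castLE (by omega : p+1 ≤ m+1)) * w (x (Fin.last m)) * symPathProb q (m+1) x
    = ∑ x : Fin (p+1) → Bool,
      g x * (∑ c, ker (qstar q (m - p)) (x (Fin.last p)) c * w c) * symPathProb q (p+1) x := by
  induction m, hp using Nat.le_induction generalizing w with
  | base =>
    apply Finset.sum_congr rfl
    intro x _
    rw [comp_castLE_refl, Nat.sub_self]
    have h0 : qstar q 0 = 0 := by simp [qstar]
    rw [h0, sum_ker_zero]
  | succ m hpm ih =>
    rw [sum_snoc]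
    have step : ∀ x : Fin (m+1) → Bool,
        (∑ b, g ((Fin.snoc x b : Fin (m+2) → Bool) ∘ Fin.castLE (by omega)) *
            w ((Fin.snoc x b : Fin (m+2) → Bool) (Fin.last (m+1))) *
            symPathProb q (m+2) (Fin.snoc x b))
        = g (x ∘ Fin.castLE (by omega : p+1 ≤ m+1)) *
            (∑ b, ker q (x (Fin.last m)) b * w b) * symPathProb q (m+1) x := by
      intro x
      have : ∀ b : Bool, g ((Fin.snoc x b : Fin (m+2) → Bool) ∘ Fin.castLE (by omega)) *
            w ((Fin.snoc x b : Fin (m+2) → Bool) (Fin.last (m+1))) *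
            symPathProb q (m+2) (Fin.snoc x b)
          = g (x ∘ Fin.castLE (by omega : p+1 ≤ m+1)) *
              (ker q (x (Fin.last m)) b * w b) * symPathProb q (m+1) x := by
        intro b
        rw [snoc_comp_castLE (by omega : p+1 ≤ m+1), Fin.snoc_last, symPathProb_snoc,
          dif_pos (by omega : 0 < m+1)]
        have : x ⟨m+1-1, by omega⟩ = x (Fin.last m) := rfl
        rw [this]
        ring
      rw [Finset.sum_congr rfl fun b _ => this b]
      simp only [Finset.mul_sum, Finset.sum_mul]
    rw [Finset.sum_congr rfl fun x _ => step x]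
    rw [ih (fun a => ∑ b, ker q a b * w b)]
    apply Finset.sum_congr rfl
    intro x _
    congr 1
    congr 1
    have hmp : m + 1 - p = (m - p) + 1 := by omega
    rw [hmp, ← qstar_succ]
    simp only [Finset.mul_sum, ← mul_assoc]
    rw [Finset.sum_comm]
    simp only [← Finset.sum_mul]
    simp only [ker_comp]



end ProjEnt

namespace ProjEnt

lemma symPathProb_nonneg {q : ℝ} (hq0 : 0 ≤ q) (hq1 : q ≤ 1) (n : ℕ) (x : Fin n → Bool) :
    0 ≤ symPathProb q n x := by
  apply Finset.prod_nonneg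
  intro i _
  split
  · norm_num
  · split <;> linarith

lemma symPathProb_zero (q : ℝ) (x : Fin 0 → Bool) : symPathProb q 0 x = 1 := by
  simp [symPathProb]

lemma symPathProb_one' (q : ℝ) (x : Fin 1 → Bool) : symPathProb q 1 x = 1/2 := by
  simp [symPathProb]

lemma symPathProb_sum (q : ℝ) (n : ℕ) : ∑ x : Fin n → Bool, symPathProb q n x = 1 := by
  have h := sum_tail q 0 n (Nat.zero_le n) (fun _ => (1:ℝ))
  simpa [symPathProb_zero] using h

lemma projDist_sum {n : ℕ} (p : (Fin n → Bool) → ℝ) (s : Finset (Fin n)) :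
    ∑ y : {i // i ∈ s} → Bool, projDist p s y = ∑ x, p x := by
  unfold projDist
  rw [Finset.sum_comm]
  apply Finset.sum_congr rfl
  intro x _
  have hiff : ∀ y : {i // i ∈ s} → Bool,
      (∀ i : {i // i ∈ s}, x i.val = y i) ↔ y = fun i => x i.val := by
    intro y; constructor
    · intro h; funext i; exact (h i).symm
    · intro h i; rw [h]
  have h1 := Finset.sum_eq_single_of_mem (s := Finset.univ)
    (f := fun y : {i // i ∈ s} → Bool => if (∀ i : {i // i ∈ s}, x i.val = y i) then p x else 0)
    (fun i => x i.val) (Finset.mem_univ _)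
    (fun y _ hy => by rw [if_neg]; intro h; exact hy ((hiff y).mp h))
  rw [h1]; rw [if_pos (fun i => rfl)]

lemma projDist_nonneg {n : ℕ} {p : (Fin n → Bool) → ℝ} (hp : ∀ x, 0 ≤ p x)
    (s : Finset (Fin n)) (y : {i // i ∈ s} → Bool) : 0 ≤ projDist p s y := by
  apply Finset.sum_nonneg
  intro x _
  split
  · exact hp x
  · exact le_rfl

end ProjEnt

namespace ProjEnt

lemma sum_ker_pick (a : ℝ) (d b : Bool) :
    ∑ c, ker a d c * (if c = b then (1:ℝ) else 0) = ker a d b := by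
  cases b <;> simp [Fintype.sum_bool]

lemma sum_fin_one (F : (Fin 1 → Bool) → ℝ) :
    ∑ x : Fin 1 → Bool, F x = ∑ c : Bool, F (fun _ => c) := by
  rw [← ((Equiv.funUnique (Fin 1) Bool).symm).sum_comp F]
  apply Finset.sum_congr rfl
  intro c _
  congr 1

lemma projDist_singleton (q : ℝ) {n : ℕ} (m : Fin n)
    (y : {i // i ∈ ({m} : Finset (Fin n))} → Bool) :
    projDist (symPathProb q n) {m} y = 1/2 := by
  have hmem : m ∈ ({m} : Finset (Fin n)) := Finset.mem_singleton_self m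
  set b := y ⟨m, hmem⟩ with hb
  have hmn : m.val + 1 ≤ n := m.isLt
  unfold projDist
  have key : ∀ x : Fin n → Bool,
      (if (∀ i : {i // i ∈ ({m} : Finset (Fin n))}, x i.val = y i) then symPathProb q n x else 0)
      = ((fun _ : Fin 1 → Bool => (1:ℝ)) ((x ∘ Fin.castLE hmn) ∘ Fin.castLE (by omega : 0+1 ≤ m.val+1))
          * (if (x ∘ Fin.castLE hmn) (Fin.last m.val) = b then (1:ℝ) else 0)) * symPathProb q n x := by
    intro x
    have hxm : (x ∘ Fin.castLE hmn) (Fin.last m.val) = x m := congrArg x (Fin.ext rfl)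
    have hcond : (∀ i : {i // i ∈ ({m} : Finset (Fin n))}, x i.val = y i) ↔ x m = b := by
      constructor
      · intro h; exact h ⟨m, hmem⟩
      · intro h i
        have : i = ⟨m, hmem⟩ := Subtype.ext (Finset.mem_singleton.mp i.prop)
        rw [this]; exact h
    by_cases hc : x m = b
    · rw [if_pos (hcond.mpr hc), hxm, if_pos hc]; ring
    · rw [if_neg (fun h => hc (hcond.mp h)), hxm, if_neg hc]; ring
  rw [Finset.sum_congr rfl fun x _ => key x]
  rw [sum_tail q (m.val+1) n hmn (fun x' => (fun _ : Fin 1 → Bool => (1:ℝ))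
    (x' ∘ Fin.castLE (by omega : 0+1 ≤ m.val+1)) * (if x' (Fin.last m.val) = b then (1:ℝ) else 0))]
  rw [bridge q 0 m.val (Nat.zero_le _) (fun _ => (1:ℝ)) (fun c => if c = b then (1:ℝ) else 0)]
  simp only [one_mul, sum_ker_pick, Nat.sub_zero]
  rw [sum_fin_one (fun x => ker (qstar q m.val) (x (Fin.last 0)) b * symPathProb q 1 x)]
  simp only [symPathProb_one']
  rw [Fintype.sum_bool]
  have h1 : ker (qstar q m.val) true b + ker (qstar q m.val) false b = 1 := by
    cases b <;> simp [ker] <;> ring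
  have : ∀ c : Bool, ker (qstar q m.val) c b * (1/2 : ℝ)
      = ker (qstar q m.val) c b * (1/2) := fun _ => rfl
  nlinarith [h1]

end ProjEnt

namespace ProjEnt

lemma projDist_factor (q : ℝ) {n : ℕ} (s : Finset (Fin n)) (hs : s.Nonempty)
    (hs' : (s.erase (s.max' hs)).Nonempty) (y : {i // i ∈ s} → Bool) :
    projDist (symPathProb q n) s y
    = projDist (symPathProb q n) (s.erase (s.max' hs))
        (fun i => y ⟨i.val, Finset.mem_of_mem_erase i.prop⟩)
      * ker (qstar q ((s.max' hs).val - ((s.erase (s.max' hs)).max' hs').val))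
          (y ⟨(s.erase (s.max' hs)).max' hs',
              Finset.mem_of_mem_erase (Finset.max'_mem _ hs')⟩)
          (y ⟨s.max' hs, Finset.max'_mem s hs⟩) := by
  set m := s.max' hs with hm
  set s' := s.erase m with hs'def
  set pm := s'.max' hs' with hpmdef
  have hpm_mem_s' : pm ∈ s' := Finset.max'_mem _ hs'
  have hpm_mem_s : pm ∈ s := Finset.mem_of_mem_erase hpm_mem_s'
  have hm_mem : m ∈ s := Finset.max'_mem s hs
  have hplm : pm < m := lt_of_le_of_ne (Finset.le_max' s pm hpm_mem_s)
    (Finset.ne_of_mem_erase hpm_mem_s')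
  have hpv : (pm : ℕ) < (m : ℕ) := hplm
  have hmn : (m : ℕ) + 1 ≤ n := m.isLt
  have hpn : (pm : ℕ) + 1 ≤ n := pm.isLt
  have hp1m1 : (pm : ℕ) + 1 ≤ (m : ℕ) + 1 := by omega
  set b := y ⟨m, hm_mem⟩ with hbdef
  set g : (Fin ((pm : ℕ)+1) → Bool) → ℝ := fun x' =>
    if (∀ i : {i // i ∈ s'}, x' ⟨((i : Fin n) : ℕ),
        Nat.lt_succ_of_le (Finset.le_max' s' i.val i.prop)⟩
        = y ⟨i.val, Finset.mem_of_mem_erase i.prop⟩) then (1:ℝ) else 0 with hgdef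
  set w : Bool → ℝ := fun c => if c = b then (1:ℝ) else 0 with hwdef
  have hgx : ∀ x : Fin n → Bool,
      g (x ∘ Fin.castLE hpn) = (if (∀ i : {i // i ∈ s'}, x i.val
        = y ⟨i.val, Finset.mem_of_mem_erase i.prop⟩) then (1:ℝ) else 0) := by
    intro x
    simp only [hgdef]
    apply if_congr _ rfl rfl
    constructor
    · intro h i
      have h2 := h i
      rwa [show (x ∘ Fin.castLE hpn) ⟨((i : Fin n) : ℕ),
        Nat.lt_succ_of_le (Finset.le_max' s' i.val i.prop)⟩ = x i.val from
        congrArg x (Fin.ext rfl)] at h2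
    · intro h i
      rw [show (x ∘ Fin.castLE hpn) ⟨((i : Fin n) : ℕ),
        Nat.lt_succ_of_le (Finset.le_max' s' i.val i.prop)⟩ = x i.val from
        congrArg x (Fin.ext rfl)]
      exact h i
  have key : ∀ x : Fin n → Bool,
      (if (∀ i : {i // i ∈ s}, x i.val = y i) then symPathProb q n x else 0)
      = (g ((x ∘ Fin.castLE hmn) ∘ Fin.castLE hp1m1)
          * w ((x ∘ Fin.castLE hmn) (Fin.last (m : ℕ)))) * symPathProb q n x := by
    intro x
    have hcomp : (x ∘ Fin.castLE hmn) ∘ Fin.castLE hp1m1 = x ∘ Fin.castLE hpn := by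
      funext j; exact congrArg x (Fin.ext rfl)
    have hxm : (x ∘ Fin.castLE hmn) (Fin.last (m : ℕ)) = x m := congrArg x (Fin.ext rfl)
    rw [hcomp, hgx, hxm]
    have hcond : (∀ i : {i // i ∈ s}, x i.val = y i)
        ↔ ((∀ i : {i // i ∈ s'}, x i.val = y ⟨i.val, Finset.mem_of_mem_erase i.prop⟩)
            ∧ x m = b) := by
      constructor
      · intro h
        exact ⟨fun i => h ⟨i.val, Finset.mem_of_mem_erase i.prop⟩, h ⟨m, hm_mem⟩⟩
      · rintro ⟨h1, h2⟩ i
        by_cases him : (i : Fin n) = m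
        · have hieq : i = ⟨m, hm_mem⟩ := Subtype.ext him
          rw [hieq]; exact h2
        · exact h1 ⟨i.val, Finset.mem_erase.mpr ⟨him, i.prop⟩⟩
    by_cases hc : (∀ i : {i // i ∈ s}, x i.val = y i)
    · obtain ⟨h1, h2⟩ := hcond.mp hc
      rw [if_pos hc, if_pos h1]
      simp only [hwdef]
      rw [if_pos h2]
      ring
    · rw [if_neg hc]
      rcases not_and_or.mp (fun hand => hc (hcond.mpr hand)) with h1 | h2
      · rw [if_neg h1]; ring
      · simp only [hwdef]
        rw [if_neg h2]; ring
  have hpick : ∀ x' : Fin ((pm : ℕ)+1) → Bool,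
      (∑ c, ker (qstar q ((m : ℕ) - (pm : ℕ))) (x' (Fin.last (pm : ℕ))) c * w c)
      = ker (qstar q ((m : ℕ) - (pm : ℕ))) (x' (Fin.last (pm : ℕ))) b := by
    intro x'
    simp only [hwdef]
    exact sum_ker_pick _ _ _
  have hconst : ∀ x' : Fin ((pm : ℕ)+1) → Bool,
      g x' * ker (qstar q ((m : ℕ) - (pm : ℕ))) (x' (Fin.last (pm : ℕ))) b
      = g x' * ker (qstar q ((m : ℕ) - (pm : ℕ))) (y ⟨pm, hpm_mem_s⟩) b := by
    intro x'
    simp only [hgdef]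
    by_cases hc : (∀ i : {i // i ∈ s'}, x' ⟨((i : Fin n) : ℕ),
        Nat.lt_succ_of_le (Finset.le_max' s' i.val i.prop)⟩
        = y ⟨i.val, Finset.mem_of_mem_erase i.prop⟩)
    · have hx'p : x' (Fin.last (pm : ℕ)) = y ⟨pm, hpm_mem_s⟩ := by
        have h2 := hc ⟨pm, hpm_mem_s'⟩
        rwa [show x' ⟨((pm : Fin n) : ℕ),
          Nat.lt_succ_of_le (Finset.le_max' s' pm hpm_mem_s')⟩ = x' (Fin.last (pm : ℕ)) from
          congrArg x' (Fin.ext rfl)] at h2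
      rw [hx'p]
    · rw [if_neg hc]
      simp
  have hrhs : projDist (symPathProb q n) s'
      (fun i => y ⟨i.val, Finset.mem_of_mem_erase i.prop⟩)
      = ∑ x' : Fin ((pm : ℕ)+1) → Bool, g x' * symPathProb q ((pm : ℕ)+1) x' := by
    show (∑ x : Fin n → Bool, if (∀ i : {i // i ∈ s'}, x i.val
        = y ⟨i.val, Finset.mem_of_mem_erase i.prop⟩) then symPathProb q n x else 0) = _
    rw [Finset.sum_congr rfl fun x _ => (by
      by_cases hc : (∀ i : {i // i ∈ s'}, x i.val
        = y ⟨i.val, Finset.mem_of_mem_erase i.prop⟩)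
      · rw [if_pos hc]
        have : g (x ∘ Fin.castLE hpn) = 1 := by rw [hgx, if_pos hc]
        rw [this]; ring
      · rw [if_neg hc]
        have : g (x ∘ Fin.castLE hpn) = 0 := by rw [hgx, if_neg hc]
        rw [this]; ring
      : (if (∀ i : {i // i ∈ s'}, x i.val = y ⟨i.val, Finset.mem_of_mem_erase i.prop⟩)
          then symPathProb q n x else 0) = g (x ∘ Fin.castLE hpn) * symPathProb q n x)]
    exact sum_tail q ((pm : ℕ)+1) n hpn g
  show (∑ x : Fin n → Bool,
      if (∀ i : {i // i ∈ s}, x i.val = y i) then symPathProb q n x else 0) = _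
  rw [Finset.sum_congr rfl fun x _ => key x]
  rw [sum_tail q ((m : ℕ)+1) n hmn
    (fun x'' => g (x'' ∘ Fin.castLE hp1m1) * w (x'' (Fin.last (m : ℕ))))]
  rw [bridge q (pm : ℕ) (m : ℕ) (le_of_lt hpv) g w]
  rw [Finset.sum_congr rfl fun x' _ => (by
    rw [hpick x', hconst x']; ring
    : g x' * (∑ c, ker (qstar q ((m : ℕ) - (pm : ℕ))) (x' (Fin.last (pm : ℕ))) c * w c)
        * symPathProb q ((pm : ℕ)+1) x'
      = (g x' * symPathProb q ((pm : ℕ)+1) x')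
        * ker (qstar q ((m : ℕ) - (pm : ℕ))) (y ⟨pm, hpm_mem_s⟩) b)]
  rw [← Finset.sum_mul, ← hrhs]

end ProjEnt

namespace ProjEnt

lemma entropyDist_equiv {β γ : Type*} [Fintype β] [Fintype γ] (e : β ≃ γ) (p : γ → ℝ) :
    entropyDist (p ∘ e) = entropyDist p :=
  e.sum_comp (fun c => -(p c * Real.logb 2 (p c)))

lemma binEnt_eq (a : ℝ) : binEnt a = -a * Real.logb 2 a - (1 - a) * Real.logb 2 (1 - a) := rfl

lemma entropyDist_prod_ker {β : Type*} [Fintype β] (P : β → ℝ) (hP : ∀ x, 0 ≤ P x)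
    (hsum : ∑ x, P x = 1) (a : ℝ) (cmap : β → Bool) :
    entropyDist (fun z : β × Bool => P z.1 * ker a (cmap z.1) z.2)
      = entropyDist P + binEnt a := by
  unfold entropyDist
  rw [Fintype.sum_prod_type]
  have point : ∀ x : β, (∑ b, -(P x * ker a (cmap x) b * Real.logb 2 (P x * ker a (cmap x) b)))
      = -(P x * Real.logb 2 (P x)) + P x * binEnt a := by
    intro x
    by_cases h0 : P x = 0
    · simp [h0]
    · have hsplit : ∀ k : ℝ, -(P x * k * Real.logb 2 (P x * k))
          = k * -(P x * Real.logb 2 (P x)) + P x * -(k * Real.logb 2 k) := by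
        intro k
        by_cases hk : k = 0
        · simp [hk]
        · rw [Real.logb_mul h0 hk]; ring
      rw [Finset.sum_congr rfl fun b _ => hsplit (ker a (cmap x) b), Finset.sum_add_distrib,
        ← Finset.sum_mul, ← Finset.mul_sum, sum_ker, sum_ker_ent, binEnt_eq]
      ring
  rw [Finset.sum_congr rfl fun x _ => point x, Finset.sum_add_distrib, ← Finset.sum_mul, hsum]
  ring

lemma entropy_proj_empty (q : ℝ) (n : ℕ) :
    entropyDist (projDist (symPathProb q n) (∅ : Finset (Fin n))) = 0 := by
  unfold entropyDist
  apply Finset.sum_eq_zero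
  intro y _
  have hy : projDist (symPathProb q n) ∅ y = 1 := by
    show (∑ x : Fin n → Bool, if (∀ i : {i // i ∈ (∅ : Finset (Fin n))}, x i.val = y i)
      then symPathProb q n x else 0) = 1
    rw [Finset.sum_congr rfl fun x _ => if_pos (fun i => absurd i.prop (Finset.notMem_empty _))]
    exact symPathProb_sum q n
  rw [hy]
  simp

lemma entropy_proj_singleton (q : ℝ) {n : ℕ} (m : Fin n) :
    entropyDist (projDist (symPathProb q n) {m}) = 1 := by
  unfold entropyDist
  rw [Finset.sum_congr rfl fun y _ => by rw [projDist_singleton q m y]]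
  rw [Finset.sum_const]
  have hcard : Fintype.card ({i // i ∈ ({m} : Finset (Fin n))} → Bool) = 2 := by
    simp [Fintype.card_fun, Fintype.card_coe]
  rw [Finset.card_univ, hcard]
  have : Real.logb 2 (1/2 : ℝ) = -1 := by
    rw [one_div, Real.logb_inv]
    simp
  rw [this]
  norm_num

noncomputable def contribF (q : ℝ) {n : ℕ} (s : Finset (Fin n)) (j : Fin n) : ℝ :=
  if h : (s.filter (· < j)).Nonempty
  then binEnt (qstar q (j.val - ((s.filter (· < j)).max' h).val)) else 1

theorem ent_proj (q : ℝ) (hq0 : 0 ≤ q) (hq1 : q ≤ 1) {n : ℕ} (s : Finset (Fin n)) :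
    entropyDist (projDist (symPathProb q n) s) = ∑ j ∈ s, contribF q s j := by
  induction s using Finset.strongInductionOn with
  | _ s ih =>
  rcases s.eq_empty_or_nonempty with rfl | hs
  · rw [entropy_proj_empty]
    simp
  set m := s.max' hs with hmdef
  have hm_mem : m ∈ s := Finset.max'_mem s hs
  set s' := s.erase m with hs'def
  rcases s'.eq_empty_or_nonempty with hempty | hs'
  · -- s = {m}
    have hsm : s = {m} := by
      apply Finset.eq_singleton_iff_unique_mem.mpr
      refine ⟨hm_mem, fun x hx => ?_⟩
      by_contra hne
      have : x ∈ s' := Finset.mem_erase.mpr ⟨hne, hx⟩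
      rw [hempty] at this
      exact absurd this (Finset.notMem_empty x)
    rw [hsm, entropy_proj_singleton, Finset.sum_singleton]
    have : ({m} : Finset (Fin n)).filter (· < m) = ∅ := by
      apply Finset.filter_false_of_mem
      intro x hx
      rw [Finset.mem_singleton.mp hx]
      exact lt_irrefl m
    rw [contribF, dif_neg]
    rw [this]
    exact Finset.not_nonempty_empty
  · -- main case
    set pm := s'.max' hs' with hpmdef
    have hpm_mem_s' : pm ∈ s' := Finset.max'_mem _ hs'
    have hpm_mem_s : pm ∈ s := Finset.mem_of_mem_erase hpm_mem_s'
    have hplm : pm < m := lt_of_le_of_ne (Finset.le_max' s pm hpm_mem_s)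
      (Finset.ne_of_mem_erase hpm_mem_s')
    -- the transport equivalence
    set e : ({i // i ∈ s'} → Bool) × Bool ≃ ({i // i ∈ s} → Bool) :=
      { toFun := fun z => fun i => if h : (i : Fin n) = m then z.2
          else z.1 ⟨i, Finset.mem_erase.mpr ⟨h, i.prop⟩⟩
        invFun := fun y => (fun i => y ⟨i, Finset.mem_of_mem_erase i.prop⟩, y ⟨m, hm_mem⟩)
        left_inv := by
          intro z
          refine Prod.ext ?_ ?_
          · funext i
            have hne : (i : Fin n) ≠ m := Finset.ne_of_mem_erase i.prop
            simp only [dif_neg hne]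
          · simp
        right_inv := by
          intro y
          funext i
          by_cases h : (i : Fin n) = m
          · simp only [dif_pos h]
            exact congrArg y (Subtype.ext h.symm)
          · simp only [dif_neg h] } with hedef
    have hfact : (projDist (symPathProb q n) s) ∘ e
        = fun z : ({i // i ∈ s'} → Bool) × Bool =>
            projDist (symPathProb q n) s' z.1
            * ker (qstar q (m.val - pm.val)) (z.1 ⟨pm, hpm_mem_s'⟩) z.2 := by
      funext z
      show projDist (symPathProb q n) s (e z) = _
      rw [projDist_factor q s hs hs' (e z)]
      congr 1
      · congr 1
        funext i
        show (if h : (i : Fin n) = m then z.2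
          else z.1 ⟨(i : Fin n), Finset.mem_erase.mpr ⟨h, Finset.mem_of_mem_erase i.prop⟩⟩)
          = z.1 i
        have hne : (i : Fin n) ≠ m := Finset.ne_of_mem_erase i.prop
        rw [dif_neg hne]
      · have h1 : e z ⟨pm, hpm_mem_s⟩ = z.1 ⟨pm, hpm_mem_s'⟩ := by
          show (if h : (pm : Fin n) = m then z.2 else _) = _
          simp only [dif_neg (Finset.ne_of_mem_erase hpm_mem_s')]
        have h2 : e z ⟨m, hm_mem⟩ = z.2 := by
          show (if h : (m : Fin n) = m then z.2
            else z.1 ⟨(m : Fin n), Finset.mem_erase.mpr ⟨h, hm_mem⟩⟩) = z.2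
          rw [dif_pos rfl]
        rw [h1, h2]
    have hent : entropyDist (projDist (symPathProb q n) s)
        = entropyDist (projDist (symPathProb q n) s') + binEnt (qstar q (m.val - pm.val)) := by
      rw [← entropyDist_equiv e (projDist (symPathProb q n) s), hfact]
      exact entropyDist_prod_ker (projDist (symPathProb q n) s')
        (projDist_nonneg (fun x => symPathProb_nonneg hq0 hq1 n x) s')
        (by rw [projDist_sum]; exact symPathProb_sum q n)
        (qstar q (m.val - pm.val)) (fun z1 => z1 ⟨pm, hpm_mem_s'⟩)
    rw [hent, ih s' (Finset.erase_ssubset hm_mem), ← Finset.sum_erase_add s _ hm_mem]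
    have hsame : ∀ j ∈ s', contribF q s j = contribF q s' j := by
      intro j hj
      have hfil : s.filter (· < j) = s'.filter (· < j) := by
        ext x
        simp only [hs'def, Finset.mem_filter, Finset.mem_erase]
        constructor
        · rintro ⟨hxs, hxj⟩
          have hjm : j ≤ m := Finset.le_max' s j (Finset.mem_of_mem_erase hj)
          exact ⟨⟨ne_of_lt (lt_of_lt_of_le hxj hjm), hxs⟩, hxj⟩
        · rintro ⟨⟨_, hxs⟩, hxj⟩; exact ⟨hxs, hxj⟩
      simp only [contribF, hfil]
    have hcm : contribF q s m = binEnt (qstar q (m.val - pm.val)) := by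
      have hfil : s.filter (· < m) = s' := by
        ext x
        simp only [hs'def, Finset.mem_filter, Finset.mem_erase]
        constructor
        · rintro ⟨hxs, hxm⟩; exact ⟨ne_of_lt hxm, hxs⟩
        · rintro ⟨hne, hxs⟩; exact ⟨hxs, lt_of_le_of_ne (Finset.le_max' s x hxs) hne⟩
      simp only [contribF, hfil]
      rw [dif_pos hs']
    rw [hcm]
    congr 1
    exact (Finset.sum_congr rfl fun j hj => (hsame j hj)).symm

end ProjEnt
namespace ProjEnt

lemma binom_powerset {α : Type*} [DecidableEq α] (w : Finset α) (lam mu : ℝ) :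
    ∑ v ∈ w.powerset, lam ^ v.card * mu ^ (w.card - v.card) = (lam + mu) ^ w.card := by
  calc ∑ v ∈ w.powerset, lam ^ v.card * mu ^ (w.card - v.card)
      = ∑ v ∈ w.powerset, (∏ _i ∈ v, lam) * ∏ _i ∈ w \ v, mu := by
        apply Finset.sum_congr rfl
        intro v hv
        rw [Finset.prod_const, Finset.prod_const, Finset.card_sdiff_of_subset (Finset.mem_powerset.mp hv)]
    _ = ∏ _i ∈ w, (lam + mu) := (Finset.prod_add _ _ w).symm
    _ = (lam + mu) ^ w.card := by rw [Finset.prod_const]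

lemma sum_powerset_union_disjoint {α : Type*} [DecidableEq α] (t : Finset α) (w : Finset α) :
    ∀ (_hd : Disjoint t w) (f : Finset α → ℝ),
    ∑ s ∈ (t ∪ w).powerset, f s = ∑ u ∈ t.powerset, ∑ v ∈ w.powerset, f (u ∪ v) := by
  induction w using Finset.induction_on with
  | empty => intro _ f; simp
  | @insert a w' ha ih =>
    intro hd f
    have hd' : Disjoint t w' := hd.mono_right (Finset.subset_insert a w')
    have hat : a ∉ t := fun h => (Finset.disjoint_left.mp hd h) (Finset.mem_insert_self a w')
    have haw : a ∉ t ∪ w' := by simp [hat, ha]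
    rw [Finset.union_insert, Finset.sum_powerset_insert haw, ih hd' f, ih hd' (fun s => f (insert a s))]
    rw [← Finset.sum_add_distrib]
    apply Finset.sum_congr rfl
    intro u hu
    rw [Finset.sum_powerset_insert ha]
    congr 1
    apply Finset.sum_congr rfl
    intro v _
    rw [Finset.union_insert]

lemma sum_subsets_depend {α : Type*} [DecidableEq α] [Fintype α] (t : Finset α)
    (F : Finset α → ℝ) (hF : ∀ s, F (s ∩ t) = F s) (lam mu : ℝ) (hlm : lam + mu = 1) :
    ∑ s : Finset α, lam ^ s.card * mu ^ (Fintype.card α - s.card) * F s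
    = ∑ u ∈ t.powerset, lam ^ u.card * mu ^ (t.card - u.card) * F u := by
  have huniv : (Finset.univ : Finset (Finset α)) = (t ∪ tᶜ).powerset := by
    rw [Finset.union_compl, Finset.powerset_univ]
  rw [huniv, sum_powerset_union_disjoint t tᶜ disjoint_compl_right]
  have hstep : ∀ u ∈ t.powerset, ∀ v ∈ tᶜ.powerset,
      lam ^ (u ∪ v).card * mu ^ (Fintype.card α - (u ∪ v).card) * F (u ∪ v)
      = (lam ^ u.card * mu ^ (t.card - u.card) * F u)
        * (lam ^ v.card * mu ^ (tᶜ.card - v.card)) := by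
    intro u hu v hv
    have hu' : u ⊆ t := Finset.mem_powerset.mp hu
    have hv' : v ⊆ tᶜ := Finset.mem_powerset.mp hv
    have hduv : Disjoint u v :=
      Finset.disjoint_left.mpr (fun a hau hav =>
        (Finset.mem_compl.mp (hv' hav)) (hu' hau))
    have hcard : (u ∪ v).card = u.card + v.card := Finset.card_union_of_disjoint hduv
    have hFuv : F (u ∪ v) = F u := by
      rw [← hF (u ∪ v)]
      congr 1
      have hvt : v ∩ t = ∅ := by
        apply Finset.eq_empty_of_forall_notMem
        intro a hav
        rcases Finset.mem_inter.mp hav with ⟨h1, h2⟩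
        exact (Finset.mem_compl.mp (hv' h1)) h2
      rw [Finset.union_inter_distrib_right, Finset.inter_eq_left.mpr hu', hvt,
        Finset.union_empty]
    have hle1 : u.card ≤ t.card := Finset.card_le_card hu'
    have hle2 : v.card ≤ tᶜ.card := Finset.card_le_card hv'
    have hcc : t.card + tᶜ.card = Fintype.card α := by
      rw [Finset.card_compl]
      have := Finset.card_le_univ t
      omega
    have hexp : Fintype.card α - (u.card + v.card) = (t.card - u.card) + (tᶜ.card - v.card) := by
      omega
    rw [hcard, hFuv, hexp, pow_add, pow_add]
    ring
  rw [Finset.sum_congr rfl fun u hu => Finset.sum_congr rfl fun v hv => hstep u hu v hv]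
  rw [Finset.sum_congr rfl fun u _ => (by rw [← Finset.mul_sum, binom_powerset, hlm, one_pow, mul_one] :
    (∑ v ∈ tᶜ.powerset, (lam ^ u.card * mu ^ (t.card - u.card) * F u)
      * (lam ^ v.card * mu ^ (tᶜ.card - v.card)))
    = lam ^ u.card * mu ^ (t.card - u.card) * F u)]

end ProjEnt

namespace ProjEnt

lemma gmax {α : Type*} [LinearOrder α] (lam mu : ℝ) (hlm : lam + mu = 1)
    (φ : α → ℝ) (c : ℝ) (t : Finset α) :
    ∑ u ∈ t.powerset, lam ^ u.card * mu ^ (t.card - u.card) *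
        (if h : u.Nonempty then φ (u.max' h) else c)
      = mu ^ t.card * c + ∑ i ∈ t, lam * mu ^ (t.filter (i < ·)).card * φ i := by
  classical
  induction t using Finset.strongInductionOn with
  | _ t ih =>
  rcases t.eq_empty_or_nonempty with rfl | ht
  · simp
  set m := t.max' ht with hmdef
  have hm_mem : m ∈ t := Finset.max'_mem t ht
  set t' := t.erase m with ht'def
  have hmt' : m ∉ t' := Finset.notMem_erase m t
  have hins : insert m t' = t := Finset.insert_erase hm_mem
  have hcard : t.card = t'.card + 1 := by
    rw [← hins, Finset.card_insert_of_notMem hmt']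
  have hsub : t' ⊂ t := Finset.erase_ssubset hm_mem
  -- expand LHS over powerset of insert
  rw [← hins, Finset.sum_powerset_insert hmt']
  rw [hins]
  -- first piece
  have hA : ∑ u ∈ t'.powerset, lam ^ u.card * mu ^ (t.card - u.card) *
      (if h : u.Nonempty then φ (u.max' h) else c)
      = mu * (mu ^ t'.card * c + ∑ i ∈ t', lam * mu ^ (t'.filter (i < ·)).card * φ i) := by
    rw [← ih t' hsub, Finset.mul_sum]
    apply Finset.sum_congr rfl
    intro u hu
    have hle : u.card ≤ t'.card := Finset.card_le_card (Finset.mem_powerset.mp hu)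
    have : t.card - u.card = (t'.card - u.card) + 1 := by omega
    rw [this, pow_succ]
    ring
  -- second piece
  have hB : ∑ u ∈ t'.powerset, lam ^ (insert m u).card * mu ^ (t.card - (insert m u).card) *
      (if h : (insert m u).Nonempty then φ ((insert m u).max' h) else c)
      = lam * φ m := by
    have hmax : ∀ u ∈ t'.powerset, ∀ h : (insert m u).Nonempty, (insert m u).max' h = m := by
      intro u hu h
      apply le_antisymm
      · apply Finset.max'_le
        intro x hx
        rcases Finset.mem_insert.mp hx with rfl | hx'
        · exact le_rfl
        · exact Finset.le_max' t x (Finset.mem_of_mem_erase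
            ((Finset.mem_powerset.mp hu) hx'))
      · exact Finset.le_max' _ m (Finset.mem_insert_self m u)
    have hstep : ∀ u ∈ t'.powerset,
        lam ^ (insert m u).card * mu ^ (t.card - (insert m u).card) *
          (if h : (insert m u).Nonempty then φ ((insert m u).max' h) else c)
        = (lam * φ m) * (lam ^ u.card * mu ^ (t'.card - u.card)) := by
      intro u hu
      have hmu : m ∉ u := fun h => hmt' ((Finset.mem_powerset.mp hu) h)
      have hc : (insert m u).card = u.card + 1 := Finset.card_insert_of_notMem hmu
      have hne : (insert m u).Nonempty := Finset.insert_nonempty m u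
      rw [dif_pos hne, hmax u hu hne, hc]
      have hle : u.card ≤ t'.card := Finset.card_le_card (Finset.mem_powerset.mp hu)
      have : t.card - (u.card + 1) = t'.card - u.card := by omega
      rw [this, pow_succ]
      ring
    rw [Finset.sum_congr rfl hstep, ← Finset.mul_sum, binom_powerset, hlm, one_pow, mul_one]
  rw [hA, hB]
  -- now the RHS
  have hRHS : ∑ i ∈ t, lam * mu ^ (t.filter (i < ·)).card * φ i
      = lam * φ m + mu * ∑ i ∈ t', lam * mu ^ (t'.filter (i < ·)).card * φ i := by
    rw [← hins, Finset.sum_insert hmt', hins]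
    congr 1
    · have : t.filter (m < ·) = ∅ := by
        apply Finset.filter_false_of_mem
        intro x hx
        exact not_lt.mpr (Finset.le_max' t x hx)
      rw [this]
      simp
    · rw [Finset.mul_sum]
      apply Finset.sum_congr rfl
      intro i hi
      have him : i < m := lt_of_le_of_ne
        (Finset.le_max' t i (Finset.mem_of_mem_erase hi)) (Finset.ne_of_mem_erase hi)
      have hfil : t.filter (i < ·) = insert m (t'.filter (i < ·)) := by
        ext x
        simp only [Finset.mem_filter, Finset.mem_insert, ht'def, Finset.mem_erase]
        constructor
        · rintro ⟨hxt, hix⟩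
          by_cases hxm : x = m
          · exact Or.inl hxm
          · exact Or.inr ⟨⟨hxm, hxt⟩, hix⟩
        · rintro (rfl | ⟨⟨_, hxt⟩, hix⟩)
          · exact ⟨hm_mem, him⟩
          · exact ⟨hxt, hix⟩
      have hnm : m ∉ t'.filter (i < ·) := fun h => hmt' (Finset.mem_of_mem_filter m h)
      rw [hfil, Finset.card_insert_of_notMem hnm, pow_succ]
      ring
  rw [hRHS, hcard, pow_succ]
  ring

lemma sum_Iio_fin {n : ℕ} (j : Fin n) (F : ℕ → ℝ) :
    ∑ i ∈ Finset.Iio j, F i.val = ∑ v ∈ Finset.range j.val, F v := by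
  apply Finset.sum_bij' (fun (i : Fin n) (_ : i ∈ Finset.Iio j) => i.val)
    (fun v hv => (⟨v, lt_trans (Finset.mem_range.mp hv) j.isLt⟩ : Fin n))
    (fun i hi => by simp only [Finset.mem_range]; exact (Finset.mem_Iio.mp hi : i < j))
    (fun v hv => by simp only [Finset.mem_Iio]; exact (Finset.mem_range.mp hv : v < (j : ℕ)))
    (fun i hi => Fin.ext rfl)
    (fun v hv => rfl)
    (fun i hi => rfl)

end ProjEnt

namespace ProjEnt

theorem condEnt_formula (q lam : ℝ) (hq0 : 0 ≤ q) (hq1 : q ≤ 1) (n : ℕ) :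
    condEntProj lam (symPathProb q n)
    = ∑ k ∈ Finset.range n, lam * ((1-lam) ^ k
        + ∑ g ∈ Finset.range k, lam * (1-lam) ^ g * binEnt (qstar q (g+1))) := by
  have hlm : lam + (1 - lam) = 1 := by ring
  unfold condEntProj
  rw [Finset.sum_congr rfl fun s _ => by rw [ent_proj q hq0 hq1 s]]
  have h1 : ∀ s : Finset (Fin n), (∑ j ∈ s, contribF q s j)
      = ∑ j : Fin n, (if j ∈ s then contribF q s j else 0) := by
    intro s
    rw [Finset.sum_ite_mem Finset.univ s _, Finset.univ_inter]
  rw [Finset.sum_congr rfl fun s _ => by rw [h1 s, Finset.mul_sum]]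
  rw [Finset.sum_comm]
  have hper : ∀ j : Fin n, (∑ s : Finset (Fin n), lam ^ s.card * (1-lam) ^ (n - s.card) *
      (if j ∈ s then contribF q s j else 0))
      = lam * ((1-lam) ^ (j : ℕ) + ∑ g ∈ Finset.range (j : ℕ),
          lam * (1-lam) ^ g * binEnt (qstar q (g+1))) := by
    intro j
    set t := insert j (Finset.Iio j) with htdef
    have hjt : j ∉ Finset.Iio j := by simp
    have hFdep : ∀ s : Finset (Fin n),
        (if j ∈ s ∩ t then contribF q (s ∩ t) j else 0)
        = (if j ∈ s then contribF q s j else 0) := by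
      intro s
      have hjmem : j ∈ t := Finset.mem_insert_self _ _
      have hiff : j ∈ s ∩ t ↔ j ∈ s := by simp [Finset.mem_inter, hjmem]
      have hfil : (s ∩ t).filter (· < j) = s.filter (· < j) := by
        ext x
        simp only [Finset.mem_filter, Finset.mem_inter, htdef, Finset.mem_insert,
          Finset.mem_Iio]
        constructor
        · rintro ⟨⟨hxs, _⟩, hxj⟩; exact ⟨hxs, hxj⟩
        · rintro ⟨hxs, hxj⟩; exact ⟨⟨hxs, Or.inr hxj⟩, hxj⟩
      by_cases hj : j ∈ s
      · rw [if_pos (hiff.mpr hj), if_pos hj]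
        simp only [contribF, hfil]
      · rw [if_neg (fun h => hj (hiff.mp h)), if_neg hj]
    have hsd := sum_subsets_depend t (fun s => if j ∈ s then contribF q s j else 0)
      hFdep lam (1-lam) hlm
    rw [Fintype.card_fin] at hsd
    rw [hsd]
    rw [htdef, Finset.sum_powerset_insert hjt]
    have hcardIio : (Finset.Iio j).card = (j : ℕ) := by simp [Fin.card_Iio]
    have hcardt : (insert j (Finset.Iio j)).card = (j : ℕ) + 1 := by
      rw [Finset.card_insert_of_notMem hjt, hcardIio]
    have hzero : ∀ u ∈ (Finset.Iio j).powerset,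
        lam ^ u.card * (1-lam) ^ ((insert j (Finset.Iio j)).card - u.card) *
          (if j ∈ u then contribF q u j else 0) = 0 := by
      intro u hu
      have : j ∉ u := fun h => hjt ((Finset.mem_powerset.mp hu) h)
      rw [if_neg this, mul_zero]
    rw [Finset.sum_congr rfl hzero, Finset.sum_const, smul_zero, zero_add]
    have hstep : ∀ u ∈ (Finset.Iio j).powerset,
        lam ^ (insert j u).card * (1-lam) ^ ((insert j (Finset.Iio j)).card - (insert j u).card) *
          (if j ∈ insert j u then contribF q (insert j u) j else 0)
        = lam * (lam ^ u.card * (1-lam) ^ ((Finset.Iio j).card - u.card) *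
            (if h : u.Nonempty then binEnt (qstar q ((j : ℕ) - ((u.max' h) : Fin n).val))
              else 1)) := by
      intro u hu
      have hju : j ∉ u := fun h => hjt ((Finset.mem_powerset.mp hu) h)
      have hci : (insert j u).card = u.card + 1 := Finset.card_insert_of_notMem hju
      have hcontrib : contribF q (insert j u) j
          = (if h : u.Nonempty then binEnt (qstar q ((j:ℕ) - (u.max' h).val)) else 1) := by
        have hfil : (insert j u).filter (· < j) = u := by
          ext x
          simp only [Finset.mem_filter, Finset.mem_insert]
          constructor
          · rintro ⟨rfl | hxu, hxj⟩
            · exact absurd hxj (lt_irrefl _)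
            · exact hxu
          · intro hxu
            exact ⟨Or.inr hxu, Finset.mem_Iio.mp ((Finset.mem_powerset.mp hu) hxu)⟩
        simp only [contribF, hfil]
      rw [if_pos (Finset.mem_insert_self j u), hcontrib, hci, hcardt, hcardIio]
      have hle : u.card ≤ (j : ℕ) := by
        have := Finset.card_le_card (Finset.mem_powerset.mp hu)
        rwa [hcardIio] at this
      have hexp : (j:ℕ) + 1 - (u.card + 1) = (j:ℕ) - u.card := by omega
      rw [hexp, pow_succ]
      ring
    rw [Finset.sum_congr rfl hstep, ← Finset.mul_sum]
    congr 1
    rw [gmax lam (1-lam) hlm (fun i => binEnt (qstar q ((j:ℕ) - (i : Fin n).val))) 1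
      (Finset.Iio j)]
    rw [hcardIio, mul_one]
    congr 1
    have hfil2 : ∀ i ∈ Finset.Iio j, ((Finset.Iio j).filter (i < ·)).card
        = (j:ℕ) - (i:ℕ) - 1 := by
      intro i hi
      have : (Finset.Iio j).filter (i < ·) = Finset.Ioo i j := by
        ext x
        simp only [Finset.mem_filter, Finset.mem_Iio, Finset.mem_Ioo]
        exact ⟨fun h => ⟨h.2, h.1⟩, fun h => ⟨h.2, h.1⟩⟩
      rw [this]
      simp [Fin.card_Ioo]
    rw [Finset.sum_congr rfl fun i hi => by rw [hfil2 i hi]]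
    rw [sum_Iio_fin j (fun v => lam * (1-lam) ^ ((j:ℕ) - v - 1) * binEnt (qstar q ((j:ℕ) - v)))]
    rw [← Finset.sum_range_reflect (fun g => lam * (1-lam) ^ g * binEnt (qstar q (g+1))) (j:ℕ)]
    apply Finset.sum_congr rfl
    intro v hv
    have hvj : v < (j:ℕ) := Finset.mem_range.mp hv
    have h1' : (j:ℕ) - 1 - v = (j:ℕ) - v - 1 := by omega
    have h2' : (j:ℕ) - v - 1 + 1 = (j:ℕ) - v := by omega
    rw [h1', h2']
  rw [Finset.sum_congr rfl fun j _ => hper j]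
  exact Fin.sum_univ_eq_sum_range (fun k => lam * ((1-lam)^k
    + ∑ g ∈ Finset.range k, lam * (1-lam)^g * binEnt (qstar q (g+1)))) n

end ProjEnt

namespace ProjEnt

lemma neg_mul_logb_bounds (a : ℝ) (h0 : 0 ≤ a) (h1 : a ≤ 1) :
    0 ≤ -(a * Real.logb 2 a) ∧ -(a * Real.logb 2 a) ≤ 2 := by
  rcases eq_or_lt_of_le h0 with rfl | hpos
  · simp
  have hl2 : (0.6931471803 : ℝ) < Real.log 2 := Real.log_two_gt_d9
  have hla : Real.log a ≤ 0 := Real.log_nonpos h0 h1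
  have hub : a * (-Real.log a) ≤ 1 - a := by
    have hinv : Real.log a⁻¹ ≤ a⁻¹ - 1 := Real.log_le_sub_one_of_pos (by positivity)
    rw [Real.log_inv] at hinv
    have h2 := mul_le_mul_of_nonneg_left hinv (le_of_lt hpos)
    calc a * (-Real.log a) ≤ a * (a⁻¹ - 1) := h2
      _ = 1 - a := by field_simp
  have hpos2 : 0 < Real.log 2 := by linarith
  rw [Real.logb]
  constructor
  · have h3 : 0 ≤ a * (-Real.log a) := mul_nonneg h0 (by linarith)
    have heq : -(a * (Real.log a / Real.log 2)) = (a * (-Real.log a)) / Real.log 2 := by ring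
    rw [heq]
    positivity
  · have heq : -(a * (Real.log a / Real.log 2)) = (a * (-Real.log a)) / Real.log 2 := by ring
    rw [heq, div_le_iff₀ hpos2]
    nlinarith

lemma binEnt_nonneg {p : ℝ} (h0 : 0 ≤ p) (h1 : p ≤ 1) : 0 ≤ binEnt p := by
  have ha := neg_mul_logb_bounds p h0 h1
  have hb := neg_mul_logb_bounds (1-p) (by linarith) (by linarith)
  rw [binEnt_eq]
  have e : -p * Real.logb 2 p - (1 - p) * Real.logb 2 (1 - p)
      = -(p * Real.logb 2 p) + -((1-p) * Real.logb 2 (1-p)) := by ring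
  rw [e]
  linarith [ha.1, hb.1]

lemma binEnt_le_four {p : ℝ} (h0 : 0 ≤ p) (h1 : p ≤ 1) : binEnt p ≤ 4 := by
  have ha := neg_mul_logb_bounds p h0 h1
  have hb := neg_mul_logb_bounds (1-p) (by linarith) (by linarith)
  rw [binEnt_eq]
  have e : -p * Real.logb 2 p - (1 - p) * Real.logb 2 (1 - p)
      = -(p * Real.logb 2 p) + -((1-p) * Real.logb 2 (1-p)) := by ring
  rw [e]
  linarith [ha.2, hb.2]

lemma qstar_mem {q : ℝ} (hq0 : 0 ≤ q) (hq2 : q ≤ 1/2) (k : ℕ) :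
    0 ≤ qstar q k ∧ qstar q k ≤ 1 := by
  have hd0 : (0:ℝ) ≤ 1 - 2*q := by linarith
  have hd1 : 1 - 2*q ≤ 1 := by linarith
  have hp0 : 0 ≤ (1-2*q)^k := pow_nonneg hd0 k
  have hp1 : (1-2*q)^k ≤ 1 := pow_le_one₀ hd0 hd1
  constructor
  · unfold qstar; linarith
  · unfold qstar; linarith

end ProjEnt

/-- For the stationary symmetric binary Markov process with transition
probability `q ∈ (0,1/2)` and `0 < λ < 1`,
`lim_{n→∞} H(X_S|S)/(λn) = E[h(q^{*G})]` with `G` geometric of parameter `λ`. -/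
theorem proj_entropy_limit_symmetric (q lam : ℝ) (hq : q ∈ Set.Ioo (0:ℝ) (1/2))
    (hlam : lam ∈ Set.Ioo (0:ℝ) 1) :
    Filter.Tendsto (fun n : ℕ => condEntProj lam (symPathProb q n) / (lam * n)) Filter.atTop
      (nhds (∑' g : ℕ, (1 - lam)^g * lam * binEnt ((1 - (1 - 2*q)^(g+1))/2))) := by
  obtain ⟨hq0, hq2⟩ := hq
  obtain ⟨hl0, hl1⟩ := hlam
  have hmu0 : (0:ℝ) ≤ 1 - lam := by linarith
  have hmu1 : (1:ℝ) - lam < 1 := by linarith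
  have hqs : ∀ k : ℕ, 0 ≤ ProjEnt.qstar q k ∧ ProjEnt.qstar q k ≤ 1 :=
    fun k => ProjEnt.qstar_mem (le_of_lt hq0) (le_of_lt hq2) k
  have hfnonneg : ∀ g : ℕ, 0 ≤ lam * (1-lam)^g * binEnt (ProjEnt.qstar q (g+1)) := by
    intro g
    exact mul_nonneg (mul_nonneg (le_of_lt hl0) (pow_nonneg hmu0 g))
      (ProjEnt.binEnt_nonneg (hqs (g+1)).1 (hqs (g+1)).2)
  have hfle : ∀ g : ℕ, lam * (1-lam)^g * binEnt (ProjEnt.qstar q (g+1))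
      ≤ (4*lam) * (1-lam)^g := by
    intro g
    have hb := ProjEnt.binEnt_le_four (hqs (g+1)).1 (hqs (g+1)).2
    have h1 : 0 ≤ lam * (1-lam)^g := mul_nonneg (le_of_lt hl0) (pow_nonneg hmu0 g)
    calc lam * (1-lam)^g * binEnt (ProjEnt.qstar q (g+1))
        ≤ lam * (1-lam)^g * 4 := mul_le_mul_of_nonneg_left hb h1
      _ = (4*lam) * (1-lam)^g := by ring
  have hsum : Summable (fun g : ℕ => lam * (1-lam)^g * binEnt (ProjEnt.qstar q (g+1))) :=
    Summable.of_nonneg_of_le hfnonneg hfle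
      ((summable_geometric_of_lt_one hmu0 hmu1).mul_left (4*lam))
  have hCk : Filter.Tendsto (fun k : ℕ => (1-lam)^k
      + ∑ g ∈ Finset.range k, lam * (1-lam)^g * binEnt (ProjEnt.qstar q (g+1)))
      Filter.atTop (nhds (0 + ∑' g : ℕ, lam * (1-lam)^g * binEnt (ProjEnt.qstar q (g+1)))) :=
    (tendsto_pow_atTop_nhds_zero_of_lt_one hmu0 hmu1).add hsum.hasSum.tendsto_sum_nat
  rw [zero_add] at hCk
  have hC := hCk.cesaro
  have hLt : (∑' g : ℕ, (1 - lam)^g * lam * binEnt ((1 - (1 - 2*q)^(g+1))/2))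
      = ∑' g : ℕ, lam * (1-lam)^g * binEnt (ProjEnt.qstar q (g+1)) := by
    apply tsum_congr
    intro g
    have : ProjEnt.qstar q (g+1) = (1 - (1 - 2*q)^(g+1))/2 := rfl
    rw [this]
    ring
  rw [hLt]
  apply hC.congr
  intro n
  rw [ProjEnt.condEnt_formula q lam (le_of_lt hq0) (by linarith) n]
  rw [← Finset.mul_sum]
  rw [mul_div_mul_left _ _ (ne_of_gt hl0)]
  rw [div_eq_inv_mul]
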